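/- Let d be a positive integer and a₀,…,a_r, k₀,…,k_r positive integers with d ∣ a_i·k_i for all i. The number of solutions in the cyclic quotient space X(d; a₀,…,a_r) = ℂ^{r+1}/μ_d (where ξ·x = (ξ^{a₀}x₀,…,ξ^{a_r}x_r)) of the system x_i^{k_i} = c_i (with all c_i ∈ ℂ∖{0}) equals k₀⋯k_r · gcd(d, a₀,…,a_r) / d. -/

import Mathlib

open Polynomial MulAction

/-- The set of `n`-th roots of a nonzero complex number is equivalent to the
`n`-th roots of unity. -/
private noncomputable def rootSetEquiv (n : ℕ) (hn : 0 < n) {c : ℂ} (hc : c ≠ 0) :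
    {z : ℂ // z ^ n = c} ≃ (Polynomial.nthRootsFinset n (1 : ℂ)) := by
  have hex := IsAlgClosed.exists_pow_nat_eq c hn
  set x₀ := hex.choose with hx₀def
  have hx₀ : x₀ ^ n = c := hex.choose_spec
  have hx₀0 : x₀ ≠ 0 := by
    intro h
    exact hc (by rw [← hx₀, h, zero_pow hn.ne'])
  refine
    { toFun := fun z => ⟨z.1 / x₀, ?_⟩
      invFun := fun w => ⟨w.1 * x₀, ?_⟩
      left_inv := fun z => by
        ext; simp [div_mul_cancel₀ _ hx₀0]
      right_inv := fun w => by
        ext; simp [mul_div_cancel_right₀ _ hx₀0] }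
  · rw [Polynomial.mem_nthRootsFinset hn (1 : ℂ), div_pow, z.2, hx₀, div_self hc]
  · rw [mul_pow, hx₀, (Polynomial.mem_nthRootsFinset hn (1 : ℂ)).mp w.2, one_mul]

private theorem card_rootSet (n : ℕ) (hn : 0 < n) {c : ℂ} (hc : c ≠ 0) :
    Nat.card {z : ℂ // z ^ n = c} = n := by
  rw [Nat.card_congr (rootSetEquiv n hn hc), Nat.card_eq_finsetCard,
    (Complex.isPrimitiveRoot_exp n hn.ne').card_nthRootsFinset]

private theorem finite_rootSet (n : ℕ) (hn : 0 < n) {c : ℂ} (hc : c ≠ 0) :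
    Finite {z : ℂ // z ^ n = c} :=
  Finite.of_equiv _ (rootSetEquiv n hn hc).symm

theorem card_solutions_cyclic_quotient (r d : ℕ) (hd : 0 < d)
    (a k : Fin (r + 1) → ℕ) (ha : ∀ i, 0 < a i) (hk : ∀ i, 0 < k i)
    (hdvd : ∀ i, d ∣ a i * k i) (c : Fin (r + 1) → ℂ) (hc : ∀ i, c i ≠ 0) :
    Nat.card (Quot (fun x y : {x : Fin (r + 1) → ℂ // ∀ i, x i ^ k i = c i} =>
        ∃ ξ : ℂ, ξ ^ d = 1 ∧
          ∀ i, (y : Fin (r + 1) → ℂ) i = ξ ^ a i * (x : Fin (r + 1) → ℂ) i)) * d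
      = (∏ i, k i) * Nat.gcd d (Finset.univ.gcd a) := by
  classical
  haveI : NeZero d := ⟨hd.ne'⟩
  set S := {x : Fin (r + 1) → ℂ // ∀ i, x i ^ k i = c i} with hS
  set G := rootsOfUnity d ℂ with hG
  set g' := Nat.gcd d (Finset.univ.gcd a) with hg'
  have hg'pos : 0 < g' := Nat.gcd_pos_of_pos_left _ hd
  have hg'd : g' ∣ d := Nat.gcd_dvd_left _ _
  have hg'a : ∀ i, g' ∣ a i := fun i =>
    (Nat.gcd_dvd_right _ _).trans (Finset.gcd_dvd (Finset.mem_univ i))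
  -- the action of G on S
  have hact : ∀ (ξ : G) (x : S) (i : Fin (r + 1)),
      (((ξ : ℂˣ) : ℂ) ^ a i * (x : Fin (r + 1) → ℂ) i) ^ k i = c i := by
    intro ξ x i
    have hξ : ((ξ : ℂˣ) : ℂ) ^ d = 1 := by
      have := (mem_rootsOfUnity' d (ξ : ℂˣ)).mp ξ.2
      simpa using this
    obtain ⟨m, hm⟩ := hdvd i
    rw [mul_pow, ← pow_mul, x.2 i, hm, pow_mul, hξ, one_pow, one_mul]
  letI sm : SMul G S := ⟨fun ξ x => ⟨fun i => ((ξ : ℂˣ) : ℂ) ^ a i * x.1 i, hact ξ x⟩⟩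
  have smul_def : ∀ (ξ : G) (x : S) (i : Fin (r + 1)),
      ((ξ • x : S) : Fin (r + 1) → ℂ) i = ((ξ : ℂˣ) : ℂ) ^ a i * (x : Fin (r + 1) → ℂ) i :=
    fun ξ x i => rfl
  letI ma : MulAction G S :=
    { one_smul := fun x => Subtype.ext (funext fun i => by
        simp [smul_def]) 
      mul_smul := fun ξ η x => Subtype.ext (funext fun i => by
        simp [smul_def, mul_pow, mul_assoc]) }
  -- coordinates of solutions are nonzero
  have hxne : ∀ (x : S) (i : Fin (r + 1)), (x : Fin (r + 1) → ℂ) i ≠ 0 := by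
    intro x i h
    exact hc i (by rw [← x.2 i, h, zero_pow (hk i).ne'])
  -- S is finite
  have eS : S ≃ ∀ i, {z : ℂ // z ^ k i = c i} := Equiv.subtypePiEquivPi (p := fun i (z : ℂ) => z ^ k i = c i)
  haveI : ∀ i, Finite {z : ℂ // z ^ k i = c i} := fun i => finite_rootSet _ (hk i) (hc i)
  haveI : Finite S := Finite.of_equiv _ eS.symm
  have hcardS : Nat.card S = ∏ i, k i := by
    rw [Nat.card_congr eS, Nat.card_pi]
    exact Finset.prod_congr rfl fun i _ => card_rootSet _ (hk i) (hc i)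
  -- the quotient in the statement is the orbit space
  have hrel : ∀ x y : S,
      (∃ ξ : ℂ, ξ ^ d = 1 ∧
          ∀ i, (y : Fin (r + 1) → ℂ) i = ξ ^ a i * (x : Fin (r + 1) → ℂ) i) ↔
        (orbitRel G S).r x y := by
    intro x y
    rw [Setoid.comm' (orbitRel G S), orbitRel_apply, MulAction.mem_orbit_iff]
    constructor
    · rintro ⟨ξ, hξd, hξ⟩
      have hξ0 : ξ ≠ 0 := fun h => one_ne_zero (by rw [← hξd, h, zero_pow hd.ne'])
      have hu : (Units.mk0 ξ hξ0) ∈ rootsOfUnity d ℂ := by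
        rw [mem_rootsOfUnity']
        simpa using hξd
      refine ⟨⟨Units.mk0 ξ hξ0, hu⟩, Subtype.ext (funext fun i => ?_)⟩
      rw [smul_def]
      simpa using (hξ i).symm
    · rintro ⟨ξ, rfl⟩
      refine ⟨((ξ : ℂˣ) : ℂ), ?_, fun i => (smul_def ξ x i)⟩
      have := (mem_rootsOfUnity' d (ξ : ℂˣ)).mp ξ.2
      simpa using this
  have equot : Quot (fun x y : S =>
      ∃ ξ : ℂ, ξ ^ d = 1 ∧
        ∀ i, (y : Fin (r + 1) → ℂ) i = ξ ^ a i * (x : Fin (r + 1) → ℂ) i)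
      ≃ Quotient (orbitRel G S) := Quot.congrRight hrel
  -- stabilizers
  have hmem : ∀ (x : S) (ξ : G), ξ ∈ stabilizer G x ↔ ((ξ : ℂˣ) : ℂ) ^ g' = 1 := by
    intro x ξ
    have hξd : ((ξ : ℂˣ) : ℂ) ^ d = 1 := by
      have := (mem_rootsOfUnity' d (ξ : ℂˣ)).mp ξ.2
      simpa using this
    rw [mem_stabilizer_iff]
    constructor
    · intro h
      have h' : ∀ i, ((ξ : ℂˣ) : ℂ) ^ a i = 1 := by
        intro i
        have := congrFun (congrArg Subtype.val h) i
        rw [smul_def] at this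
        exact (mul_eq_right₀ (hxne x i)).mp this
      have h1 : orderOf ((ξ : ℂˣ) : ℂ) ∣ g' := by
        refine Nat.dvd_gcd (orderOf_dvd_of_pow_eq_one hξd) ?_
        exact Finset.dvd_gcd fun i _ => orderOf_dvd_of_pow_eq_one (h' i)
      exact orderOf_dvd_iff_pow_eq_one.mp h1
    · intro h
      refine Subtype.ext (funext fun i => ?_)
      rw [smul_def]
      obtain ⟨m, hm⟩ := hg'a i
      rw [hm, pow_mul, h, one_pow, one_mul]
  -- S is nonempty
  obtain ⟨x₀⟩ : Nonempty S := by
    have : ∀ i, ∃ z : ℂ, z ^ k i = c i := fun i =>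
      IsAlgClosed.exists_pow_nat_eq (c i) (hk i)
    choose z hz using this
    exact ⟨⟨z, hz⟩⟩
  set K := stabilizer G x₀ with hK
  have hstab : ∀ x : S, stabilizer G x = K := by
    intro x
    ext ξ
    rw [hmem, hK, hmem]
  -- card of K
  have hcardK : Nat.card K = g' := by
    rw [← card_rootSet g' hg'pos one_ne_zero]
    refine Nat.card_congr (Equiv.ofBijective
      (fun ξ => ⟨(((ξ : G) : ℂˣ) : ℂ), (hmem x₀ ξ).mp ξ.2⟩) ⟨?_, ?_⟩)
    · intro ξ η h
      have := congrArg Subtype.val h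
      exact Subtype.ext (Subtype.ext (Units.ext this))
    · rintro ⟨z, hz⟩
      have hz0 : z ≠ 0 := fun h => one_ne_zero (by rw [← hz, h, zero_pow hg'pos.ne'])
      have hzd : z ^ d = 1 := by
        obtain ⟨m, hm⟩ := hg'd
        rw [hm, pow_mul, hz, one_pow]
      have hu : (Units.mk0 z hz0) ∈ rootsOfUnity d ℂ := by
        rw [mem_rootsOfUnity']; simpa using hzd
      refine ⟨⟨⟨Units.mk0 z hz0, hu⟩, ?_⟩, rfl⟩
      rw [hmem]
      simpa using hz
  -- card of G
  have hcardG : Nat.card G = d := by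
    rw [Complex.card_rootsOfUnity d]
  -- the class formula
  have e1 : S ≃ (Quotient (orbitRel G S)) × (G ⧸ K) := by
    refine (selfEquivSigmaOrbitsQuotientStabilizer G S).trans
      ((Equiv.sigmaCongrRight fun ω => Subgroup.quotientEquivOfEq (hstab _)).trans
        (Equiv.sigmaEquivProd _ _))
  have hcount : Nat.card S = Nat.card (Quotient (orbitRel G S)) * Nat.card (G ⧸ K) := by
    rw [Nat.card_congr e1, Nat.card_prod]
  have hLagrange : Nat.card (G ⧸ K) * Nat.card K = d := by
    rw [← hcardG, Subgroup.card_eq_card_quotient_mul_card_subgroup K]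
  calc Nat.card (Quot _) * d
      = Nat.card (Quotient (orbitRel G S)) * (Nat.card (G ⧸ K) * Nat.card K) := by
        rw [Nat.card_congr equot, hLagrange]
    _ = (Nat.card (Quotient (orbitRel G S)) * Nat.card (G ⧸ K)) * Nat.card K := by ring
    _ = Nat.card S * Nat.card K := by rw [hcount]
    _ = (∏ i, k i) * g' := by rw [hcardS, hcardK]
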